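/- If P(z) is a polynomial of degree n, then for every r ≥ 1, max_{|z|=r} |z·P''(z) + P'(z)| ≤ n²·r^{n−1} · max_{|z|=1} |P(z)|. -/

import Mathlib

open Polynomial

/-- The maximum of `|P(w)|` over the unit circle `|w| = 1`. -/
noncomputable def maxMod (P : Polynomial ℂ) : ℝ :=
  sSup ((fun w => ‖P.eval w‖) '' {w : ℂ | ‖w‖ = 1})

lemma circle_eq : {w : ℂ | ‖w‖ = 1} = Metric.sphere (0:ℂ) 1 := by
  ext w; simp [Complex.dist_eq]

lemma le_maxMod (Q : Polynomial ℂ) {w : ℂ} (hw : ‖w‖ = 1) :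
    ‖Q.eval w‖ ≤ maxMod Q := by
  apply le_csSup
  · rw [circle_eq]
    exact ((isCompact_sphere 0 1).image (by continuity)).bddAbove
  · exact ⟨w, hw, rfl⟩

lemma maxMod_le (Q : Polynomial ℂ) {C : ℝ}
    (h : ∀ w : ℂ, ‖w‖ = 1 → ‖Q.eval w‖ ≤ C) : maxMod Q ≤ C := by
  refine csSup_le ⟨_, ⟨1, by simp, rfl⟩⟩ ?_
  rintro x ⟨w, hw, rfl⟩; exact h w hw

lemma maxMod_nonneg (Q : Polynomial ℂ) : 0 ≤ maxMod Q :=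
  le_trans (by positivity) (le_maxMod Q (w := 1) (by simp))

/-- Maximum modulus principle on the unit disk. -/
lemma abs_eval_le_of_abs_le (Q : Polynomial ℂ) {z : ℂ} (hz : ‖z‖ ≤ 1) {C : ℝ}
    (h : ∀ w : ℂ, ‖w‖ = 1 → ‖Q.eval w‖ ≤ C) :
    ‖Q.eval z‖ ≤ C := by
  have := Complex.norm_le_of_forall_mem_frontier_norm_le (f := fun z => Q.eval z)
    (U := Metric.ball (0:ℂ) 1) Metric.isBounded_ball
    ((Q.differentiable).diffContOnCl)
    (C := C) (fun w hw => by
      rw [frontier_ball (0:ℂ) one_ne_zero] at hw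
      exact h w (by simpa [Complex.dist_eq] using hw))
    (z := z) (by
      rw [closure_ball (0:ℂ) one_ne_zero]
      simpa [Complex.dist_eq] using hz)
  simpa using this

lemma eval_reflect_key (Q : Polynomial ℂ) {m : ℕ} (hm : Q.natDegree ≤ m) {z : ℂ} (hz : z ≠ 0) :
    (reflect m Q).eval z⁻¹ * z ^ m = Q.eval z := by
  haveI := invertibleOfNonzero hz
  have := eval₂_reflect_mul_pow (RingHom.id ℂ) z m Q hm
  rw [invOf_eq_inv] at this
  exact this

/-- On the unit circle the reflected polynomial is bounded by `maxMod Q`. -/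
lemma abs_eval_reflect_circle (Q : Polynomial ℂ) {m : ℕ} (hm : Q.natDegree ≤ m) {w : ℂ}
    (hw : ‖w‖ = 1) :
    ‖(reflect m Q).eval w‖ ≤ maxMod Q := by
  have hw0 : w ≠ 0 := by intro h; simp [h] at hw
  have hwi : ‖w⁻¹‖ = 1 := by simp [hw]
  have hwi0 : w⁻¹ ≠ 0 := inv_ne_zero hw0
  have key := eval_reflect_key Q hm hwi0
  rw [inv_inv] at key
  have h1 : ‖(reflect m Q).eval w‖ * 1 = ‖Q.eval w⁻¹‖ := by
    calc ‖(reflect m Q).eval w‖ * 1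
        = ‖(reflect m Q).eval w‖ * ‖w⁻¹‖ ^ m := by rw [hwi, one_pow]
      _ = ‖(reflect m Q).eval w * (w⁻¹) ^ m‖ := by rw [norm_mul, norm_pow]
      _ = _ := by rw [key]
  rw [mul_one] at h1
  rw [h1]
  exact le_maxMod Q hwi

/-- Growth lemma: `|Q(z)| ≤ |z|^m maxMod Q` for `|z| ≥ 1`. -/
lemma growth (Q : Polynomial ℂ) {m : ℕ} (hm : Q.natDegree ≤ m) {z : ℂ}
    (hz : 1 ≤ ‖z‖) :
    ‖Q.eval z‖ ≤ ‖z‖ ^ m * maxMod Q := by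
  have hz0 : z ≠ 0 := by intro h; simp [h] at hz; linarith
  have key := eval_reflect_key Q hm hz0
  have habs : ‖Q.eval z‖ =
      ‖(reflect m Q).eval z⁻¹‖ * ‖z‖ ^ m := by
    rw [← key, norm_mul, norm_pow]
  rw [habs, mul_comm]
  have hzi : ‖z⁻¹‖ ≤ 1 := by
    rw [norm_inv]; exact inv_le_one_of_one_le₀ hz
  gcongr
  exact abs_eval_le_of_abs_le _ hzi (fun w hw => abs_eval_reflect_circle Q hm hw)

/-- Coefficient bound. -/
lemma coeff_bound (Q : Polynomial ℂ) {m : ℕ} (hm : Q.natDegree ≤ m) :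
    ‖Q.coeff m‖ ≤ maxMod Q := by
  have h0 : (reflect m Q).eval 0 = Q.coeff m := by
    rw [← coeff_zero_eq_eval_zero, coeff_reflect]
    simp
  rw [← h0]
  exact abs_eval_le_of_abs_le _ (by simp) (fun w hw => abs_eval_reflect_circle Q hm hw)

lemma prod_eval_ne_zero (S : Multiset ℂ) (hS : ∀ r ∈ S, ‖r‖ < 1)
    {w : ℂ} (hw : 1 ≤ ‖w‖) :
    (S.map (fun r => X - C r)).prod.eval w ≠ 0 := by
  rw [eval_multiset_prod]
  apply Multiset.prod_ne_zero
  intro h0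
  rw [Multiset.mem_map] at h0
  obtain ⟨p, hp, hp0⟩ := h0
  rw [Multiset.mem_map] at hp
  obtain ⟨r, hr, rfl⟩ := hp
  rw [eval_sub, eval_X, eval_C] at hp0
  rw [sub_eq_zero] at hp0
  subst hp0
  exact absurd (hS _ hr) (not_lt.mpr hw)

lemma re_pos_aux (S : Multiset ℂ) (hS : ∀ r ∈ S, ‖r‖ < 1)
    {w : ℂ} (hw : 1 ≤ ‖w‖) :
    0 ≤ (w * (derivative (S.map (fun r => X - C r)).prod).eval w *
        (starRingEnd ℂ) ((S.map (fun r => X - C r)).prod.eval w)).re := by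
  induction S using Multiset.induction_on with
  | empty => simp
  | cons r S ih =>
    have hr : ‖r‖ < 1 := hS r (Multiset.mem_cons_self r S)
    have ihS := ih (fun x hx => hS x (Multiset.mem_cons_of_mem hx))
    simp only [Multiset.map_cons, Multiset.prod_cons, derivative_mul, derivative_sub,
      derivative_X, derivative_C, sub_zero, one_mul, eval_add, eval_mul, eval_sub,
      eval_X, eval_C]
    set H := (S.map (fun r => X - C r)).prod with hH
    set a := H.eval w with ha
    set b := (derivative H).eval w with hb
    have key : w * (a + (w - r) * b) * (starRingEnd ℂ) ((w - r) * a)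
        = ((Complex.normSq a : ℂ)) * (w * (starRingEnd ℂ) (w - r))
          + ((Complex.normSq (w - r) : ℂ)) * (w * b * (starRingEnd ℂ) a) := by
      rw [map_mul]
      linear_combination (w * (starRingEnd ℂ) (w - r)) * Complex.mul_conj a
        + (w * b * (starRingEnd ℂ) a) * Complex.mul_conj (w - r)
    have hpos : 0 < (w * (starRingEnd ℂ) (w - r)).re := by
      have h2 : w * (starRingEnd ℂ) (w - r) = (Complex.normSq w : ℂ) - w * (starRingEnd ℂ) r := by
        rw [map_sub, mul_sub, Complex.mul_conj]
      rw [h2]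
      have h3 : (w * (starRingEnd ℂ) r).re ≤ ‖w‖ * ‖r‖ := by
        calc (w * (starRingEnd ℂ) r).re ≤ ‖w * (starRingEnd ℂ) r‖ := Complex.re_le_norm _
          _ = ‖w‖ * ‖r‖ := by rw [norm_mul, Complex.norm_conj]
      have h4 : Complex.normSq w = ‖w‖ ^ 2 := (Complex.sq_norm w).symm
      simp only [Complex.sub_re, Complex.ofReal_re]
      nlinarith [norm_nonneg r]
    rw [key]
    simp only [Complex.add_re, Complex.re_ofReal_mul]
    have h5 : 0 ≤ Complex.normSq a := Complex.normSq_nonneg a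
    have h6 : 0 ≤ Complex.normSq (w - r) := Complex.normSq_nonneg _
    nlinarith

lemma re_pos (S : Multiset ℂ) (hS0 : S ≠ 0) (hS : ∀ r ∈ S, ‖r‖ < 1)
    {w : ℂ} (hw : 1 ≤ ‖w‖) :
    0 < (w * (derivative (S.map (fun r => X - C r)).prod).eval w *
        (starRingEnd ℂ) ((S.map (fun r => X - C r)).prod.eval w)).re := by
  obtain ⟨r, hrS⟩ := Multiset.exists_mem_of_ne_zero hS0
  obtain ⟨S', rfl⟩ := Multiset.exists_cons_of_mem hrS
  have hr : ‖r‖ < 1 := hS r (Multiset.mem_cons_self r S')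
  have haux := re_pos_aux S' (fun x hx => hS x (Multiset.mem_cons_of_mem hx)) hw
  have hane : (S'.map (fun r => X - C r)).prod.eval w ≠ 0 :=
    prod_eval_ne_zero S' (fun x hx => hS x (Multiset.mem_cons_of_mem hx)) hw
  simp only [Multiset.map_cons, Multiset.prod_cons, derivative_mul, derivative_sub,
    derivative_X, derivative_C, sub_zero, one_mul, eval_add, eval_mul, eval_sub,
    eval_X, eval_C]
  set H := (S'.map (fun r => X - C r)).prod with hH
  set a := H.eval w with ha
  set b := (derivative H).eval w with hb
  have key : w * (a + (w - r) * b) * (starRingEnd ℂ) ((w - r) * a)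
      = ((Complex.normSq a : ℂ)) * (w * (starRingEnd ℂ) (w - r))
        + ((Complex.normSq (w - r) : ℂ)) * (w * b * (starRingEnd ℂ) a) := by
    rw [map_mul]
    linear_combination (w * (starRingEnd ℂ) (w - r)) * Complex.mul_conj a
      + (w * b * (starRingEnd ℂ) a) * Complex.mul_conj (w - r)
  have hpos : 0 < (w * (starRingEnd ℂ) (w - r)).re := by
    have h2 : w * (starRingEnd ℂ) (w - r) = (Complex.normSq w : ℂ) - w * (starRingEnd ℂ) r := by
      rw [map_sub, mul_sub, Complex.mul_conj]
    rw [h2]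
    have h3 : (w * (starRingEnd ℂ) r).re ≤ ‖w‖ * ‖r‖ := by
      calc (w * (starRingEnd ℂ) r).re ≤ ‖w * (starRingEnd ℂ) r‖ := Complex.re_le_norm _
        _ = ‖w‖ * ‖r‖ := by rw [norm_mul, Complex.norm_conj]
    have h4 : Complex.normSq w = ‖w‖ ^ 2 := (Complex.sq_norm w).symm
    simp only [Complex.sub_re, Complex.ofReal_re]
    nlinarith [norm_nonneg r]
  rw [key]
  simp only [Complex.add_re, Complex.re_ofReal_mul]
  have h5 : 0 < Complex.normSq a := Complex.normSq_pos.mpr hane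
  have h6 : 0 ≤ Complex.normSq (w - r) := Complex.normSq_nonneg _
  nlinarith

/-- Gauss–Lucas style: if all roots of `G` lie in the open unit disk and
`natDegree G ≥ 1`, then `G'` has no zero with `|w| ≥ 1`. -/
lemma deriv_ne_zero_of_roots_in_disk (G : Polynomial ℂ) (hG : G ≠ 0)
    (hd : 1 ≤ G.natDegree) (hroots : ∀ x ∈ G.roots, ‖x‖ < 1)
    {w : ℂ} (hw : 1 ≤ ‖w‖) : (derivative G).eval w ≠ 0 := by
  have hfac : G = C G.leadingCoeff * (G.roots.map fun a => X - C a).prod :=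
    Splits.eq_prod_roots (IsAlgClosed.splits G)
  have hlc : G.leadingCoeff ≠ 0 := leadingCoeff_ne_zero.mpr hG
  have hroots0 : G.roots ≠ 0 := by
    intro h0
    rw [h0] at hfac
    simp only [Multiset.map_zero, Multiset.prod_zero, mul_one] at hfac
    rw [hfac, natDegree_C] at hd
    omega
  have hpos := re_pos G.roots hroots0 hroots hw
  intro hzero
  rw [hfac, derivative_C_mul, eval_mul, eval_C] at hzero
  have hz2 : (derivative (G.roots.map fun a => X - C a).prod).eval w = 0 := by
    rcases mul_eq_zero.mp hzero with h | h
    · exact absurd h hlc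
    · exact h
  rw [hz2] at hpos
  simp at hpos

/-- A polynomial vanishing on the unit circle is zero. -/
lemma eq_zero_of_maxMod_eq_zero (Q : Polynomial ℂ) (h : maxMod Q = 0) : Q = 0 := by
  apply Q.eq_zero_of_infinite_isRoot
  have hinj : Set.InjOn (fun t : ℝ => Complex.exp (t * Complex.I)) (Set.Ioo 0 1) := by
    intro a ha b hb hab
    simp only at hab
    rw [Complex.exp_eq_exp_iff_exists_int] at hab
    obtain ⟨k, hk⟩ := hab
    have hc : ((a : ℂ) - b - k * (2 * Real.pi)) * Complex.I = 0 := by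
      push_cast at hk ⊢
      linear_combination hk
    rcases mul_eq_zero.mp hc with h1 | h1
    · have h2 : (a : ℝ) - b - k * (2 * Real.pi) = 0 := by exact_mod_cast h1
      have hpi := Real.pi_gt_three
      have hk0 : k = 0 := by
        rcases lt_trichotomy (0:ℤ) k with hlt | heq | hlt
        · exfalso
          have : (1:ℝ) ≤ (k:ℝ) := by exact_mod_cast hlt
          obtain ⟨ha1, ha2⟩ := ha; obtain ⟨hb1, hb2⟩ := hb
          nlinarith
        · omega
        · exfalso
          have : (k:ℝ) ≤ -1 := by exact_mod_cast Int.le_sub_one_of_lt hlt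
          obtain ⟨ha1, ha2⟩ := ha; obtain ⟨hb1, hb2⟩ := hb
          nlinarith
      rw [hk0] at h2
      have : (a : ℝ) = b := by push_cast at h2; linarith
      exact this
    · exact absurd h1 Complex.I_ne_zero
  have himg : (fun t : ℝ => Complex.exp (t * Complex.I)) '' (Set.Ioo 0 1) ⊆
      { x | Q.IsRoot x } := by
    rintro x ⟨t, _, rfl⟩
    have habs : ‖Complex.exp (t * Complex.I)‖ = 1 :=
      Complex.norm_exp_ofReal_mul_I t
    have := le_maxMod Q habs
    rw [h] at this
    have h0 : ‖Q.eval (Complex.exp (t * Complex.I))‖ = 0 :=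
      le_antisymm this (by positivity)
    simpa [Polynomial.IsRoot] using (norm_eq_zero.mp h0)
  exact ((Set.Ioo_infinite (by norm_num)).image hinj).mono himg

/-- **Bernstein's inequality** (extended form): if `natDegree Q ≤ m`, `m ≥ 1`, then
`|Q'(z)| ≤ m * maxMod Q * |z|^(m-1)` for `|z| ≥ 1`. -/
lemma bernstein_ineq (Q : Polynomial ℂ) {m : ℕ} (hm1 : 1 ≤ m) (hm : Q.natDegree ≤ m)
    {z : ℂ} (hz : 1 ≤ ‖z‖) :
    ‖(derivative Q).eval z‖ ≤ m * maxMod Q * ‖z‖ ^ (m - 1) := by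
  set B := maxMod Q with hB
  rcases eq_or_lt_of_le (maxMod_nonneg Q) with hB0 | hBpos
  · have hQ : Q = 0 := eq_zero_of_maxMod_eq_zero Q hB0.symm
    simp only [hQ, derivative_zero, eval_zero, norm_zero]
    rw [hB, ← hB0]
    simp
  by_contra hcon
  push_neg at hcon
  have hz0 : z ≠ 0 := by intro h; rw [h] at hz; simp at hz; linarith
  have hzpow : (0:ℝ) < ‖z‖ ^ (m-1) := by positivity
  set D : ℂ := (m : ℂ) * (B : ℂ) * z ^ (m-1) with hD
  have hDabs : ‖D‖ = m * B * ‖z‖ ^ (m-1) := by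
    rw [hD, norm_mul, norm_mul, norm_pow, Complex.norm_natCast,
      Complex.norm_of_nonneg hBpos.le]
  have hDpos : (0:ℝ) < m * B * ‖z‖ ^ (m-1) := by
    have : (0:ℝ) < m := by exact_mod_cast hm1
    positivity
  have hD0 : D ≠ 0 := by
    intro h
    rw [h] at hDabs
    simp only [norm_zero] at hDabs
    linarith
  set lam : ℂ := (derivative Q).eval z / D with hlamdef
  have hlam : 1 < ‖lam‖ := by
    rw [hlamdef, norm_div, hDabs, lt_div_iff₀ hDpos, one_mul]
    exact hcon
  set G : Polynomial ℂ := C (lam * (B:ℂ)) * X ^ m - Q with hGdef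
  have hGm : G.coeff m = lam * B - Q.coeff m := by
    rw [hGdef, coeff_sub, coeff_C_mul, coeff_X_pow]
    simp
  have hcoeffQ : ‖Q.coeff m‖ ≤ B := coeff_bound Q hm
  have habslamB : ‖lam * (B:ℂ)‖ = ‖lam‖ * B := by
    rw [norm_mul, Complex.norm_of_nonneg hBpos.le]
  have hGm0 : G.coeff m ≠ 0 := by
    rw [hGm]
    intro h
    rw [sub_eq_zero] at h
    have : ‖lam * (B:ℂ)‖ = ‖Q.coeff m‖ := by rw [h]
    rw [habslamB] at this
    nlinarith
  have hdeg_le : G.natDegree ≤ m := by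
    refine le_trans (natDegree_sub_le _ _) (max_le ?_ hm)
    exact le_trans (natDegree_C_mul_le _ _) (by simp)
  have hdeg : G.natDegree = m := le_antisymm hdeg_le (le_natDegree_of_ne_zero hGm0)
  have hGne : G ≠ 0 := by intro h; rw [h] at hGm0; simp at hGm0
  have hroots : ∀ x ∈ G.roots, ‖x‖ < 1 := by
    intro x hx
    by_contra hx1
    push_neg at hx1
    have hroot : G.eval x = 0 := isRoot_of_mem_roots hx
    rw [hGdef] at hroot
    simp only [eval_sub, eval_mul, eval_C, eval_pow, eval_X] at hroot
    have heq : lam * (B:ℂ) * x ^ m = Q.eval x := by linear_combination hroot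
    have hgrow : ‖Q.eval x‖ ≤ ‖x‖ ^ m * B := growth Q hm hx1
    have habs2 : ‖Q.eval x‖ = ‖lam‖ * B * ‖x‖ ^ m := by
      rw [← heq, norm_mul, norm_pow, habslamB]
    have hxm : (1:ℝ) ≤ ‖x‖ ^ m := one_le_pow₀ hx1
    nlinarith [mul_pos (mul_pos (sub_pos.mpr hlam) hBpos) (lt_of_lt_of_le zero_lt_one hxm)]
  have hne := deriv_ne_zero_of_roots_in_disk G hGne (hdeg ▸ hm1) hroots hz
  apply hne
  rw [hGdef]
  rw [derivative_sub, derivative_C_mul, derivative_X_pow]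
  simp only [eval_sub, eval_mul, eval_C, eval_pow, eval_X]
  have : lam * (B:ℂ) * ((m:ℂ) * z ^ (m-1)) = lam * D := by rw [hD]; ring
  rw [this, hlamdef, div_mul_cancel₀ _ hD0]
  ring

/-- `max_(|z|=r) |z P''(z) + P'(z)| ≤ n² r^(n-1) max_(|z|=1) |P(z)|` for `r ≥ 1`. -/
theorem deriv_combination_bound (P : Polynomial ℂ) (n : ℕ) (hn : 1 ≤ n)
    (hdeg : P.natDegree = n) (r : ℝ) (hr : 1 ≤ r) :
    ∀ z : ℂ, ‖z‖ = r →
      ‖z * (Polynomial.derivative (Polynomial.derivative P)).eval z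
          + (Polynomial.derivative P).eval z‖
        ≤ (n : ℝ) ^ 2 * r ^ (n - 1) * maxMod P := by
  intro z hz
  set M := maxMod P with hM
  have hM0 : 0 ≤ M := maxMod_nonneg P
  -- first Bernstein application: on the unit circle
  have hstep1 : ∀ w : ℂ, ‖w‖ = 1 →
      ‖(derivative P).eval w‖ ≤ n * M := by
    intro w hw
    have := bernstein_ineq P hn hdeg.le (z := w) (by rw [hw])
    simpa [hw] using this
  -- the polynomial S = X * P'
  set S : Polynomial ℂ := X * derivative P with hS
  have hSdeg : S.natDegree ≤ n := by
    refine le_trans (natDegree_mul_le) ?_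
    have h1 : (X : Polynomial ℂ).natDegree = 1 := natDegree_X
    have h2 : (derivative P).natDegree ≤ n - 1 := by
      have := natDegree_derivative_le P
      omega
    omega
  have hSmax : maxMod S ≤ n * M := by
    apply maxMod_le
    intro w hw
    rw [hS, eval_mul, eval_X, norm_mul, hw, one_mul]
    exact hstep1 w hw
  -- second Bernstein application at z
  have hzr : 1 ≤ ‖z‖ := by rw [hz]; exact hr
  have hmain := bernstein_ineq S hn hSdeg hzr
  have hSd : (derivative S).eval z
      = z * (derivative (derivative P)).eval z + (derivative P).eval z := by
    rw [hS, derivative_mul, derivative_X]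
    simp only [eval_add, eval_mul, eval_X, one_mul, eval_one]
    ring
  rw [hSd] at hmain
  rw [hz] at hmain
  calc ‖z * (derivative (derivative P)).eval z + (derivative P).eval z‖
      ≤ n * maxMod S * r ^ (n-1) := hmain
    _ ≤ n * (n * M) * r ^ (n-1) := by
        have hrn : (0:ℝ) ≤ r ^ (n-1) := by positivity
        have hn0 : (0:ℝ) ≤ n := by positivity
        have h1 : (n:ℝ) * maxMod S ≤ n * (n * M) := mul_le_mul_of_nonneg_left hSmax hn0
        exact mul_le_mul_of_nonneg_right h1 hrn
    _ = (n : ℝ) ^ 2 * r ^ (n-1) * M := by ring
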